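/- Fix integers w ≥ 1 and N with 0 < 32w < N, and a real M ≥ 1. Let R₁ = [4w, N] × [0, w/2] and R₂ = [0, w/2] × [4w, N], and L = R₁ ∪ R₂. Suppose p(x,y) is a real bivariate polynomial of total degree d such that p(4w, 4w) ≥ 1.5·M and 0 ≤ p(x,y) ≤ 1 for all (x,y) ∈ L. Then d = Ω(√(N/w) · log M); concretely, there is a universal constant α > 0 such that d ≥ α·√(N/w)·log(1.5M). -/

import Mathlib

open Polynomial Real Finset

open Polynomial Real

lemma natDegree_T_le (n : ℕ) : (Chebyshev.T ℝ (n : ℤ)).natDegree ≤ n := by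
  induction n using Nat.twoStepInduction with
  | zero => simp [Chebyshev.T_zero]
  | one => simp [Chebyshev.T_one]
  | more n ih1 ih2 =>
    have h : ((n + 2 : ℕ) : ℤ) = (n : ℤ) + 2 := by push_cast; ring
    rw [h, Chebyshev.T_add_two]
    refine (natDegree_sub_le _ _).trans (max_le ?_ ?_)
    · refine (natDegree_mul_le).trans ?_
      have h2 : (2 * X : ℝ[X]).natDegree ≤ 1 :=
        (natDegree_mul_le).trans (by simp)
      have h3 : (Chebyshev.T ℝ ((n:ℤ) + 1)).natDegree ≤ n + 1 := by
        have : ((n:ℤ) + 1) = ((n + 1 : ℕ) : ℤ) := by push_cast; ring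
        rw [this]; exact ih2
      omega
    · exact ih1.trans (by omega)

lemma T_eval_add_inv (n : ℕ) (t : ℝ) (ht : t ≠ 0) :
    2 * (Chebyshev.T ℝ (n : ℤ)).eval ((t + 1/t)/2) = t^n + (1/t)^n := by
  induction n using Nat.twoStepInduction with
  | zero => norm_num [Chebyshev.T_zero]
  | one => simp [Chebyshev.T_one]; field_simp
  | more n ih1 ih2 =>
    have h : ((n + 2 : ℕ) : ℤ) = (n : ℤ) + 2 := by push_cast; ring
    rw [h, Chebyshev.T_add_two]
    have h1 : ((n:ℤ) + 1) = ((n + 1 : ℕ) : ℤ) := by push_cast; ring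
    simp only [eval_sub, eval_mul, eval_ofNat, eval_X, h1]
    have hu : t * (1/t) = 1 := by field_simp
    have key : 2 * (2 * ((t + 1/t)/2) * eval ((t + 1/t)/2) (Chebyshev.T ℝ ((n+1:ℕ):ℤ))
        - eval ((t + 1/t)/2) (Chebyshev.T ℝ (n:ℤ)))
        = (t + 1/t) * (2 * eval ((t + 1/t)/2) (Chebyshev.T ℝ ((n+1:ℕ):ℤ)))
          - 2 * eval ((t + 1/t)/2) (Chebyshev.T ℝ (n:ℤ)) := by ring
    rw [key, ih2, ih1]
    linear_combination (t^n + (1/t)^n) * hu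

open Polynomial Real Finset

-- growth: T_n(x) ≤ (x + sqrt(x^2-1))^n for x ≥ 1
lemma T_le_pow (n : ℕ) {x : ℝ} (hx : 1 ≤ x) :
    (Chebyshev.T ℝ (n : ℤ)).eval x ≤ (x + Real.sqrt (x^2 - 1))^n := by
  set r := Real.sqrt (x^2-1) with hr
  have hr0 : 0 ≤ r := Real.sqrt_nonneg _
  have hr2 : r^2 = x^2 - 1 := Real.sq_sqrt (by nlinarith)
  set t := x + r with hts
  have ht1 : 1 ≤ t := by nlinarith
  have ht0 : t ≠ 0 := by positivity
  have hinv : 1/t = x - r := by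
    rw [div_eq_iff ht0]; nlinarith
  have hx' : (t + 1/t)/2 = x := by rw [hinv]; ring
  have := T_eval_add_inv n t ht0
  rw [hx'] at this
  have hinv1 : (1/t)^n ≤ t^n := by
    apply pow_le_pow_left₀ (by rw [hinv]; nlinarith)
    rw [hinv]; nlinarith
  nlinarith [pow_nonneg (le_trans zero_le_one ht1) n]

open Polynomial Real Finset

lemma cheb_compare (n : ℕ) (g : ℝ[X]) (hdeg : g.natDegree ≤ n) (c : ℝ)
    (hb : ∀ x ∈ Set.Icc (-1:ℝ) 1, |g.eval x| ≤ c) {y : ℝ} (hy : 1 ≤ y) :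
    g.eval y ≤ c * (Chebyshev.T ℝ (n:ℤ)).eval y := by
  classical
  have hc0 : 0 ≤ c := le_trans (abs_nonneg _) (hb 1 (by norm_num))
  rcases Nat.eq_zero_or_pos n with h0 | hn
  · subst h0
    have hgC := Polynomial.eq_C_of_natDegree_le_zero hdeg
    have h1 : |g.eval 1| ≤ c := hb 1 (by norm_num)
    rw [hgC] at h1 ⊢
    simpa [Chebyshev.T_zero] using le_trans (le_abs_self _) (by simpa using h1)
  · have hnR : (0:ℝ) < n := by exact_mod_cast hn
    set v : Fin (n+1) → ℝ := fun k => Real.cos (k * π / n) with hv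
    have hmono : ∀ {j k : Fin (n+1)}, j < k → v k < v j := by
      intro j k hjk
      apply Real.cos_lt_cos_of_nonneg_of_le_pi (by positivity)
      · rw [div_le_iff₀ hnR]
        have hk : (k:ℝ) ≤ n := by exact_mod_cast Nat.lt_succ_iff.mp k.isLt
        nlinarith [Real.pi_pos]
      · have hjk' : (j:ℝ) < k := by exact_mod_cast hjk
        have := Real.pi_pos
        gcongr
    have hinj : Set.InjOn v (Finset.univ : Finset (Fin (n+1))) := by
      intro a _ b _ hab
      by_contra hne
      rcases lt_or_gt_of_ne hne with h | h
      · exact (ne_of_gt (hmono h)) hab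
      · exact (ne_of_gt (hmono h)).symm hab
    have hcard : (Finset.univ : Finset (Fin (n+1))).card = n+1 := by simp
    have hdegg : g.degree < (Finset.univ : Finset (Fin (n+1))).card := by
      rw [hcard]
      exact lt_of_le_of_lt (Polynomial.natDegree_le_iff_degree_le.mp hdeg)
        (by exact_mod_cast Nat.lt_succ_self n)
    have hdegT : (Chebyshev.T ℝ (n:ℤ)).degree < (Finset.univ : Finset (Fin (n+1))).card := by
      rw [hcard]
      exact lt_of_le_of_lt (Polynomial.natDegree_le_iff_degree_le.mp (natDegree_T_le n))
        (by exact_mod_cast Nat.lt_succ_self n)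
    -- bounds at the nodes
    have hvmem : ∀ k : Fin (n+1), v k ∈ Set.Icc (-1:ℝ) 1 :=
      fun k => ⟨Real.neg_one_le_cos _, Real.cos_le_one _⟩
    -- T values at the nodes
    have hT : ∀ k : Fin (n+1), (Chebyshev.T ℝ (n:ℤ)).eval (v k) = (-1:ℝ)^(k:ℕ) := by
      intro k
      show (Chebyshev.T ℝ (n:ℤ)).eval (Real.cos _) = _
      rw [Polynomial.Chebyshev.T_real_cos]
      have hn0 : (n:ℝ) ≠ 0 := ne_of_gt hnR
      have harg : (n:ℝ) * ((k:ℝ) * π / n) = ((k:ℕ) : ℝ) * π := by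
        field_simp
      push_cast
      rw [harg]
      simpa using Real.cos_nat_mul_pi_sub 0 (k:ℕ)
    -- basis evaluation signs
    set B : Fin (n+1) → ℝ := fun k => (Lagrange.basis Finset.univ v k).eval y with hB
    have hBval : ∀ k, B k = ∏ j ∈ Finset.univ.erase k, ((v k - v j)⁻¹ * (y - v j)) := by
      intro k
      rw [hB]
      simp only [Lagrange.basis, eval_prod, Lagrange.basisDivisor, eval_mul, eval_C, eval_sub,
        eval_X]
    have hsign : ∀ k : Fin (n+1), 0 ≤ (-1:ℝ)^(k:ℕ) * B k := by
      intro k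
      have hcardk : ((Finset.univ.erase k).filter (fun j => j < k)).card = (k:ℕ) := by
        have : (Finset.univ.erase k).filter (fun j => j < k)
            = (Finset.univ.filter (fun j : Fin (n+1) => j < k)) := by
          ext j
          simp only [Finset.mem_filter, Finset.mem_erase, Finset.mem_univ, true_and, and_true]
          exact ⟨fun h => h.2, fun h => ⟨ne_of_lt h, h⟩⟩
        rw [this]
        rw [show (Finset.univ.filter (fun j : Fin (n+1) => j < k)) = Finset.Iio k from by
          ext j; simp]
        exact Fin.card_Iio (b := k)
      have hpow : (-1:ℝ)^(k:ℕ)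
          = ∏ j ∈ Finset.univ.erase k, (if j < k then (-1:ℝ) else 1) := by
        rw [Finset.prod_ite, Finset.prod_const, Finset.prod_const, one_pow, mul_one, hcardk]
      rw [hpow, hBval, ← Finset.prod_mul_distrib]
      apply Finset.prod_nonneg
      intro j hj
      have hjk : j ≠ k := Finset.mem_erase.mp hj |>.1
      have hyvj : 0 ≤ y - v j := by
        have := (hvmem j).2; linarith
      rcases lt_or_gt_of_ne hjk with h | h
      · have hlt : v k < v j := hmono h
        have : (v k - v j)⁻¹ < 0 := inv_lt_zero.mpr (by linarith)
        rw [if_pos h]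
        nlinarith
      · have hlt : v j < v k := hmono h
        have : 0 < (v k - v j)⁻¹ := inv_pos.mpr (by linarith)
        rw [if_neg (not_lt.mpr h.le)]
        nlinarith
    -- interpolation identities
    have hgI := Lagrange.eq_interpolate hinj hdegg
    have hTI := Lagrange.eq_interpolate hinj hdegT
    have hgy : g.eval y = ∑ k : Fin (n+1), g.eval (v k) * B k := by
      conv_lhs => rw [hgI]
      simp [Lagrange.interpolate_apply, eval_finset_sum, hB]
    have hTy : (Chebyshev.T ℝ (n:ℤ)).eval y = ∑ k : Fin (n+1), (-1:ℝ)^(k:ℕ) * B k := by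
      conv_lhs => rw [hTI]
      simp only [Lagrange.interpolate_apply, eval_finset_sum, eval_mul, eval_C, hB]
      exact Finset.sum_congr rfl fun k _ => by rw [hT k]
    rw [hgy, hTy, Finset.mul_sum]
    apply Finset.sum_le_sum
    intro k _
    have h1 : |B k| = (-1:ℝ)^(k:ℕ) * B k := by
      rcases Nat.even_or_odd (k:ℕ) with he | ho
      · rw [he.neg_one_pow, one_mul]
        rw [abs_of_nonneg]
        have := hsign k
        rwa [he.neg_one_pow, one_mul] at this
      · rw [ho.neg_one_pow]
        have := hsign k
        rw [ho.neg_one_pow] at this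
        rw [abs_of_nonpos (by linarith)]
        ring
    calc g.eval (v k) * B k ≤ |g.eval (v k) * B k| := le_abs_self _
      _ = |g.eval (v k)| * |B k| := abs_mul _ _
      _ ≤ c * ((-1:ℝ)^(k:ℕ) * B k) := by
          rw [h1]
          exact mul_le_mul_of_nonneg_right (hb _ (hvmem k)) (by rw [← h1]; exact abs_nonneg _)
      _ = c * ((-1:ℝ)^(k:ℕ) * B k) := rfl

open Polynomial Real Finset

lemma growth_left (q : ℝ[X]) (d : ℕ) (hdeg : q.natDegree ≤ d) (a b z c : ℝ)
    (hab : a < b) (hza : z < a)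
    (hc : ∀ s ∈ Set.Icc a b, |q.eval s| ≤ c) :
    q.eval z ≤ c * ((a + b - 2*z)/(b-a) + Real.sqrt (((a + b - 2*z)/(b-a))^2 - 1))^d := by
  have hba : 0 < b - a := by linarith
  set x₀ := (a + b - 2*z)/(b-a) with hx₀def
  have hx₀ : 1 < x₀ := by rw [lt_div_iff₀ hba]; linarith
  set G := q.comp (Polynomial.C ((a+b)/2) - Polynomial.C ((b-a)/2) * Polynomial.X) with hG
  have hGdeg : G.natDegree ≤ d := by
    refine natDegree_comp_le.trans ?_
    have h1 : (Polynomial.C ((a+b)/2) - Polynomial.C ((b-a)/2) * Polynomial.X : ℝ[X]).natDegree ≤ 1 :=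
      (natDegree_sub_le _ _).trans
        (max_le (by simp) ((natDegree_mul_le).trans (by simp)))
    calc q.natDegree * (Polynomial.C ((a+b)/2) - Polynomial.C ((b-a)/2) * Polynomial.X : ℝ[X]).natDegree
        ≤ q.natDegree * 1 := Nat.mul_le_mul_left _ h1
      _ ≤ d := by rw [mul_one]; exact hdeg
  have hGeval : ∀ u : ℝ, G.eval u = q.eval ((a+b)/2 - (b-a)/2 * u) := by
    intro u; simp [hG, eval_comp]
  have hGb : ∀ u ∈ Set.Icc (-1:ℝ) 1, |G.eval u| ≤ c := by
    intro u hu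
    rw [hGeval]
    apply hc
    constructor <;> nlinarith [hu.1, hu.2]
  have hcmp := cheb_compare d G hGdeg c hGb (y := x₀) hx₀.le
  have hz : (a+b)/2 - (b-a)/2 * x₀ = z := by
    rw [hx₀def]; field_simp; ring
  rw [hGeval, hz] at hcmp
  refine hcmp.trans ?_
  have hc0 : 0 ≤ c := le_trans (abs_nonneg _) (hc a ⟨le_refl a, hab.le⟩)
  exact mul_le_mul_of_nonneg_left (T_le_pow d hx₀.le) hc0

lemma T_pair_aux (i j : ℕ) (hji : j ≤ i) (t : ℝ) (ht : 0 < t) :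
    2 * (Chebyshev.T ℝ ((i:ℤ) - (j:ℤ))).eval ((t + 1/t)/2)
      = t^i * (1/t)^j + (1/t)^i * t^j := by
  have ht0 : t ≠ 0 := ne_of_gt ht
  have hk : (i:ℤ) - (j:ℤ) = ((i - j : ℕ) : ℤ) := by omega
  rw [hk, T_eval_add_inv _ t ht0]
  have hu : t * (1/t) = 1 := by field_simp
  have e1 : t^(i-j) * t^j = t^i := pow_sub_mul_pow t hji
  have e2 : (1/t)^(i-j) * (1/t)^j = (1/t)^i := pow_sub_mul_pow (1/t) hji
  have h1 : t^i * (1/t)^j = t^(i-j) := by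
    calc t^i * (1/t)^j = (t^(i-j) * t^j) * (1/t)^j := by rw [e1]
      _ = t^(i-j) * (t * (1/t))^j := by rw [mul_pow]; ring
      _ = t^(i-j) := by rw [hu, one_pow, mul_one]
  have h2 : (1/t)^i * t^j = (1/t)^(i-j) := by
    calc (1/t)^i * t^j = ((1/t)^(i-j) * (1/t)^j) * t^j := by rw [e2]
      _ = (1/t)^(i-j) * ((1/t) * t)^j := by rw [mul_pow]; ring
      _ = (1/t)^(i-j) := by rw [one_div, inv_mul_cancel₀ ht0, one_pow, mul_one]
  rw [h1, h2]

lemma T_pair (i j : ℕ) (t : ℝ) (ht : 0 < t) :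
    2 * (Chebyshev.T ℝ ((i:ℤ) - (j:ℤ))).eval ((t + 1/t)/2)
      = t^i * (1/t)^j + (1/t)^i * t^j := by
  rcases le_total j i with h | h
  · exact T_pair_aux i j h t ht
  · have hneg : (i:ℤ) - (j:ℤ) = -((j:ℤ) - (i:ℤ)) := by ring
    rw [hneg, Chebyshev.T_neg]
    have := T_pair_aux j i h t ht
    linarith

open Polynomial Real Finset

lemma finsupp_sum_fin2 (m : Fin 2 →₀ ℕ) : (m.sum fun _ e => e) = m 0 + m 1 := by
  rw [Finsupp.sum_fintype _ _ (fun _ => rfl)]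
  exact Fin.sum_univ_two m

lemma line_bound (w N : ℕ) (M : ℝ) (p : MvPolynomial (Fin 2) ℝ) (d : ℕ)
    (hw : 0 < w) (hN : 32 * w < N) (hM : 1 ≤ M) (hdeg : p.totalDegree = d)
    (hcorner : MvPolynomial.eval ![4 * (w : ℝ), 4 * (w : ℝ)] p ≥ 1.5 * M)
    (hL : ∀ x y : ℝ,
        ((4 * (w : ℝ) ≤ x ∧ x ≤ (N : ℝ) ∧ 0 ≤ y ∧ y ≤ (w : ℝ) / 2) ∨
         (0 ≤ x ∧ x ≤ (w : ℝ) / 2 ∧ 4 * (w : ℝ) ≤ y ∧ y ≤ (N : ℝ))) →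
        0 ≤ MvPolynomial.eval ![x, y] p ∧ MvPolynomial.eval ![x, y] p ≤ 1) :
    Real.log (1.5 * M) ≤ 29 * d := by
  have hw1 : (1:ℝ) ≤ w := by exact_mod_cast hw
  have hN' : 32 * (w:ℝ) < N := by exact_mod_cast hN
  set c4 : ℝ := 4 * (w:ℝ) with hc4
  set h : ℝ[X] := ∑ m ∈ p.support,
      Polynomial.C (MvPolynomial.coeff m p) *
        ((Polynomial.C c4 + Polynomial.X)^(m 0) * (Polynomial.C c4 - Polynomial.X)^(m 1)) with hh
  have heval : ∀ u : ℝ, h.eval u = MvPolynomial.eval ![c4 + u, c4 - u] p := by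
    intro u
    rw [MvPolynomial.eval_eq', hh, eval_finset_sum]
    refine Finset.sum_congr rfl fun m _ => ?_
    simp [Fin.prod_univ_two]
  have hdegh : h.natDegree ≤ d := by
    rw [hh]
    refine natDegree_sum_le_of_forall_le _ _ fun m hm => ?_
    refine (natDegree_C_mul_le _ _).trans ?_
    refine (natDegree_mul_le).trans ?_
    have h1 : ((Polynomial.C c4 + Polynomial.X : ℝ[X])^(m 0)).natDegree ≤ m 0 := by
      refine (natDegree_pow_le).trans ?_
      have : (Polynomial.C c4 + Polynomial.X : ℝ[X]).natDegree ≤ 1 := by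
        rw [add_comm]; exact le_of_eq (natDegree_X_add_C _)
      calc m 0 * (Polynomial.C c4 + Polynomial.X : ℝ[X]).natDegree ≤ m 0 * 1 :=
            Nat.mul_le_mul_left _ this
        _ = m 0 := mul_one _
    have h2 : ((Polynomial.C c4 - Polynomial.X : ℝ[X])^(m 1)).natDegree ≤ m 1 := by
      refine (natDegree_pow_le).trans ?_
      have hneg : (Polynomial.C c4 - Polynomial.X : ℝ[X]) = -(Polynomial.X - Polynomial.C c4) := by
        ring
      have : (Polynomial.C c4 - Polynomial.X : ℝ[X]).natDegree ≤ 1 := by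
        rw [hneg, natDegree_neg]; exact le_of_eq (natDegree_X_sub_C _)
      calc m 1 * (Polynomial.C c4 - Polynomial.X : ℝ[X]).natDegree ≤ m 1 * 1 :=
            Nat.mul_le_mul_left _ this
        _ = m 1 := mul_one _
    have hmd : m 0 + m 1 ≤ d := by
      rw [← hdeg, ← finsupp_sum_fin2 m]
      exact MvPolynomial.le_totalDegree hm
    omega
  have hb : ∀ s ∈ Set.Icc (7*(w:ℝ)/2) (4*(w:ℝ)), |h.eval s| ≤ 1 := by
    intro s hs
    obtain ⟨hs1, hs2⟩ := hs
    rw [heval]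
    have hmem := hL (c4 + s) (c4 - s) (Or.inl (by
      refine ⟨by simp [hc4]; linarith, ?_, ?_, ?_⟩
      · simp only [hc4]; linarith
      · simp only [hc4]; linarith
      · simp only [hc4]; linarith))
    rw [abs_le]
    exact ⟨by linarith [hmem.1], by linarith [hmem.2]⟩
  have hgl := growth_left h d hdegh (7*(w:ℝ)/2) (4*(w:ℝ)) 0 1
      (by linarith) (by linarith) hb
  have hx0 : (7*(w:ℝ)/2 + 4*(w:ℝ) - 2*0)/(4*(w:ℝ) - 7*(w:ℝ)/2) = 15 := by
    rw [div_eq_iff (ne_of_gt (by linarith : (0:ℝ) < 4*(w:ℝ) - 7*(w:ℝ)/2))]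
    ring
  rw [hx0] at hgl
  have hsq : Real.sqrt ((15:ℝ)^2 - 1) ≤ 15 := by
    have h225 : ((15:ℝ)^2 - 1) ≤ 15^2 := by norm_num
    calc Real.sqrt ((15:ℝ)^2 - 1) ≤ Real.sqrt ((15:ℝ)^2) := Real.sqrt_le_sqrt h225
      _ = 15 := Real.sqrt_sq (by norm_num)
  have hpow : ((15:ℝ) + Real.sqrt ((15:ℝ)^2 - 1))^d ≤ 30^d := by
    apply pow_le_pow_left₀ (by positivity) (by linarith)
  have hcorner' : 1.5 * M ≤ h.eval 0 := by
    rw [heval]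
    have : (![c4 + 0, c4 - 0]) = ![4 * (w:ℝ), 4 * (w:ℝ)] := by
      simp [hc4]
    rw [this]
    exact hcorner
  have hfin : 1.5 * M ≤ 30^d := by
    calc 1.5 * M ≤ h.eval 0 := hcorner'
      _ ≤ 1 * ((15:ℝ) + Real.sqrt ((15:ℝ)^2 - 1))^d := hgl
      _ ≤ 30^d := by rw [one_mul]; exact hpow
  have hMpos : (0:ℝ) < 1.5 * M := by linarith
  calc Real.log (1.5 * M) ≤ Real.log ((30:ℝ)^d) :=
        (Real.log_le_log_iff hMpos (by positivity)).mpr hfin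
    _ = d * Real.log 30 := Real.log_pow (n := d) (x := 30)
    _ ≤ d * 29 := by
        apply mul_le_mul_of_nonneg_left ?_ (by positivity)
        have := Real.log_le_sub_one_of_pos (by norm_num : (0:ℝ) < 30)
        linarith
    _ = 29 * d := by ring

open Polynomial Real Finset

set_option maxHeartbeats 1000000 in
lemma hyp_bound (w N : ℕ) (M : ℝ) (p : MvPolynomial (Fin 2) ℝ) (d : ℕ)
    (hw : 0 < w) (hN : 256 * w < N) (hM : 1 ≤ M) (hdeg : p.totalDegree = d)
    (hcorner : MvPolynomial.eval ![4 * (w : ℝ), 4 * (w : ℝ)] p ≥ 1.5 * M)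
    (hL : ∀ x y : ℝ,
        ((4 * (w : ℝ) ≤ x ∧ x ≤ (N : ℝ) ∧ 0 ≤ y ∧ y ≤ (w : ℝ) / 2) ∨
         (0 ≤ x ∧ x ≤ (w : ℝ) / 2 ∧ 4 * (w : ℝ) ≤ y ∧ y ≤ (N : ℝ))) →
        0 ≤ MvPolynomial.eval ![x, y] p ∧ MvPolynomial.eval ![x, y] p ≤ 1) :
    Real.sqrt ((N:ℝ)/(w:ℝ)) * Real.log (1.5 * M) ≤ 16 * d := by
  have hw1 : (1:ℝ) ≤ w := by exact_mod_cast hw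
  have hwpos : (0:ℝ) < w := by linarith
  have hN' : 256 * (w:ℝ) < N := by exact_mod_cast hN
  set c4 : ℝ := 4 * (w:ℝ) with hc4
  have hc4pos : 0 < c4 := by rw [hc4]; linarith
  set T₀ : ℝ := (N:ℝ)/(4*(w:ℝ)) with hT₀
  have hT64 : 64 < T₀ := by
    rw [hT₀, lt_div_iff₀ (by linarith)]; linarith
  have hT₀pos : 0 < T₀ := by linarith
  have hT₀inv : 0 < 1/T₀ := one_div_pos.mpr hT₀pos
  have hc4T : c4 * T₀ = N := by
    rw [hc4, hT₀]; field_simp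
  set g : ℝ[X] := ∑ m ∈ p.support,
      Polynomial.C (2 * MvPolynomial.coeff m p * c4^(m 0 + m 1)) *
        (Chebyshev.T ℝ ((m 0 : ℤ) - (m 1 : ℤ))).comp
          (Polynomial.C (2⁻¹ : ℝ) * Polynomial.X) with hg
  have hdegg : g.natDegree ≤ d := by
    rw [hg]
    refine natDegree_sum_le_of_forall_le _ _ fun m hm => ?_
    refine (natDegree_C_mul_le _ _).trans ?_
    refine (natDegree_comp_le).trans ?_
    have hTdeg : (Chebyshev.T ℝ ((m 0 : ℤ) - (m 1 : ℤ))).natDegree ≤ m 0 + m 1 := by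
      rw [← Chebyshev.T_natAbs]
      refine (natDegree_T_le _).trans ?_
      omega
    have hlin : (Polynomial.C (2⁻¹:ℝ) * Polynomial.X).natDegree ≤ 1 :=
      (natDegree_mul_le).trans (by simp)
    have hmd : m 0 + m 1 ≤ d := by
      rw [← hdeg, ← finsupp_sum_fin2 m]
      exact MvPolynomial.le_totalDegree hm
    calc (Chebyshev.T ℝ ((m 0 : ℤ) - (m 1 : ℤ))).natDegree *
          (Polynomial.C (2⁻¹:ℝ) * Polynomial.X).natDegree
        ≤ (m 0 + m 1) * 1 := Nat.mul_le_mul hTdeg hlin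
      _ ≤ d := by omega
  have hgeval : ∀ t : ℝ, 0 < t → g.eval (t + 1/t)
      = MvPolynomial.eval ![c4*t, c4*(1/t)] p + MvPolynomial.eval ![c4*(1/t), c4*t] p := by
    intro t ht
    rw [MvPolynomial.eval_eq', MvPolynomial.eval_eq', hg, eval_finset_sum,
      ← Finset.sum_add_distrib]
    refine Finset.sum_congr rfl fun m _ => ?_
    have hpair := T_pair (m 0) (m 1) t ht
    simp only [eval_mul, eval_C, eval_comp, eval_X, Fin.prod_univ_two,
      Matrix.cons_val_zero, Matrix.cons_val_one, Matrix.head_cons]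
    have harg : (2⁻¹:ℝ) * (t + 1/t) = (t + 1/t)/2 := by ring
    rw [harg]
    linear_combination (MvPolynomial.coeff m p * c4^(m 0 + m 1)) * hpair
  have hcorner2 : 3 * M ≤ g.eval 2 := by
    have h1 := hgeval 1 one_pos
    have e1 : (1:ℝ) + 1/1 = 2 := by norm_num
    have e2 : c4 * 1 = c4 := mul_one c4
    have e3 : c4 * (1/1 : ℝ) = c4 := by norm_num
    rw [e1, e2, e3] at h1
    rw [h1]; linarith [hcorner]
  have hb : ∀ s ∈ Set.Icc (65/8 : ℝ) (T₀ + 1/T₀), |g.eval s| ≤ 2 := by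
    intro s hs
    obtain ⟨hs1, hs2⟩ := hs
    have h1T : 1/T₀ ≤ T₀ := by
      rw [div_le_iff₀ hT₀pos]; nlinarith
    have hs2' : s ≤ 2 * T₀ := by linarith
    have hsqnn : (0:ℝ) ≤ s^2 - 4 := by nlinarith
    set r : ℝ := Real.sqrt (s^2 - 4) with hr
    have hrnn : 0 ≤ r := Real.sqrt_nonneg _
    have hr2 : r^2 = s^2 - 4 := Real.sq_sqrt hsqnn
    set t : ℝ := (s + r)/2 with htdef
    have ht8 : 8 ≤ t := by
      rcases le_or_gt 16 s with hbig | hsmall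
      · rw [htdef]; linarith
      · have h16 : 16 - s ≤ r := by
          rw [hr, show (16:ℝ) - s = Real.sqrt ((16 - s)^2) from
            (Real.sqrt_sq (by linarith)).symm]
          apply Real.sqrt_le_sqrt
          nlinarith
        rw [htdef]; linarith
    have ht0 : 0 < t := by linarith
    have htT : t ≤ T₀ := by
      have hrle : r ≤ 2*T₀ - s := by
        rw [hr, show (2*T₀ - s) = Real.sqrt ((2*T₀ - s)^2) from
          (Real.sqrt_sq (by linarith)).symm]
        apply Real.sqrt_le_sqrt
        have h4T : 4 * T₀ * s ≤ 4 * T₀^2 + 4 := by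
          have h := mul_le_mul_of_nonneg_left hs2 (by linarith : (0:ℝ) ≤ 4*T₀)
          have he : 4*T₀ * (T₀ + 1/T₀) = 4*T₀^2 + 4 := by field_simp
          linarith [he ▸ h]
        have hexp : (2*T₀ - s)^2 = 4*T₀^2 - 4*T₀*s + s^2 := by ring
        linarith
      rw [htdef]; linarith
    have hprod : t * ((s - r)/2) = 1 := by
      rw [htdef]; linear_combination (-1/4) * hr2
    have hinv : (s - r)/2 = 1/t := eq_one_div_of_mul_eq_one_left
      (by linarith [hprod] : ((s - r)/2) * t = 1)
    have hst : t + 1/t = s := by rw [← hinv, htdef]; ring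
    rw [← hst, hgeval t ht0]
    have hx1 : c4 ≤ c4 * t := by nlinarith
    have hx2 : c4 * t ≤ N := by rw [← hc4T]; nlinarith
    have hy1 : 0 ≤ c4 * (1/t) := by positivity
    have hy2 : c4 * (1/t) ≤ (w:ℝ)/2 := by
      have hinv8 : 1/t ≤ 1/8 := by
        apply one_div_le_one_div_of_le (by norm_num) ht8
      calc c4 * (1/t) ≤ c4 * (1/8) := by nlinarith
        _ = (w:ℝ)/2 := by rw [hc4]; ring
    have hm1 := hL (c4*t) (c4*(1/t)) (Or.inl ⟨hx1, hx2, hy1, hy2⟩)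
    have hm2 := hL (c4*(1/t)) (c4*t) (Or.inr ⟨hy1, hy2, hx1, hx2⟩)
    rw [abs_le]
    exact ⟨by linarith [hm1.1, hm2.1], by linarith [hm1.2, hm2.2]⟩
  have hab : (65/8:ℝ) < T₀ + 1/T₀ := by linarith
  have hgl := growth_left g d hdegg (65/8) (T₀ + 1/T₀) 2 2 hab (by norm_num) hb
  set D : ℝ := T₀ + 1/T₀ - 65/8 with hD
  have hDpos : 0 < D := by rw [hD]; linarith
  set μ : ℝ := (49/4)/D with hμdef
  have hμpos : 0 < μ := by rw [hμdef]; positivity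
  have hx0 : (65/8 + (T₀ + 1/T₀) - 2*2)/D = 1 + μ := by
    have h' : (65/8 + (T₀ + 1/T₀) - 2*2) = D + 49/4 := by rw [hD]; ring
    rw [h', add_div, div_self (ne_of_gt hDpos), hμdef]
  rw [hx0] at hgl
  have hμT : μ * T₀ ≤ 16 := by
    have h65 : (65/8:ℝ) ≤ (65/512)*T₀ := by nlinarith
    have hDge : (447/512) * T₀ ≤ D := by rw [hD]; linarith
    rw [hμdef, div_mul_eq_mul_div, div_le_iff₀ hDpos]
    linarith
  have hμ4 : μ ≤ 1/4 := by
    nlinarith [mul_lt_mul_of_pos_left hT64 hμpos]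
  set q : ℝ := Real.sqrt μ with hq
  have hqnn : 0 ≤ q := Real.sqrt_nonneg _
  have hq2 : q^2 = μ := Real.sq_sqrt hμpos.le
  have hsqμ : Real.sqrt ((1+μ)^2 - 1) ≤ (3/2) * q := by
    rw [hq, show (3/2:ℝ) * Real.sqrt μ = Real.sqrt ((3/2)^2 * μ) from by
      rw [Real.sqrt_mul (by norm_num), Real.sqrt_sq (by norm_num)]]
    apply Real.sqrt_le_sqrt
    nlinarith
  have hμq : μ ≤ (1/2) * q := by
    have h12 : q ≤ 1/2 := by
      rw [hq, show (1/2:ℝ) = Real.sqrt ((1/2)^2) from (Real.sqrt_sq (by norm_num)).symm]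
      apply Real.sqrt_le_sqrt; nlinarith
    nlinarith
  set t₀ : ℝ := 1 + μ + Real.sqrt ((1+μ)^2 - 1) with ht₀def
  have ht₀1 : 1 ≤ t₀ := by rw [ht₀def]; have := Real.sqrt_nonneg ((1+μ)^2-1); linarith
  have ht₀le : t₀ ≤ 1 + 2*q := by rw [ht₀def]; linarith
  have h15 : 1.5 * M ≤ t₀^d := by
    linarith [hcorner2, hgl]
  have hPd : Real.log (1.5*M) ≤ (d:ℝ) * (2*q) := by
    have hlog : Real.log (1.5*M) ≤ Real.log (t₀^d) :=
      (Real.log_le_log_iff (by linarith) (by positivity)).mpr h15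
    have hlogpow : Real.log (t₀^d) = (d:ℝ) * Real.log t₀ := Real.log_pow (n := d) (x := t₀)
    have hlt : Real.log t₀ ≤ t₀ - 1 := Real.log_le_sub_one_of_pos (by linarith)
    have h2 : Real.log t₀ ≤ 2*q := by linarith
    calc Real.log (1.5*M) ≤ (d:ℝ) * Real.log t₀ := by rw [← hlogpow]; exact hlog
      _ ≤ (d:ℝ) * (2*q) := by
          apply mul_le_mul_of_nonneg_left h2 (by positivity)
  have hqT : q * Real.sqrt T₀ ≤ 4 := by
    have h1 : Real.sqrt (μ * T₀) ≤ 4 := by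
      rw [show (4:ℝ) = Real.sqrt (4^2) from (Real.sqrt_sq (by norm_num)).symm]
      apply Real.sqrt_le_sqrt; nlinarith
    rw [hq, ← Real.sqrt_mul hμpos.le]
    exact h1
  have hNw : Real.sqrt ((N:ℝ)/(w:ℝ)) = 2 * Real.sqrt T₀ := by
    have he : (N:ℝ)/(w:ℝ) = 2^2 * T₀ := by
      rw [hT₀]; field_simp; ring
    rw [he, Real.sqrt_mul (by norm_num), Real.sqrt_sq (by norm_num)]
  have hPnn : 0 ≤ Real.log (1.5*M) := Real.log_nonneg (by linarith)
  rw [hNw]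
  have hstep : Real.log (1.5*M) * Real.sqrt T₀ ≤ 8 * d := by
    calc Real.log (1.5*M) * Real.sqrt T₀ ≤ ((d:ℝ) * (2*q)) * Real.sqrt T₀ :=
          mul_le_mul_of_nonneg_right hPd (Real.sqrt_nonneg _)
      _ = 2*(d:ℝ)*(q*Real.sqrt T₀) := by ring
      _ ≤ 2*(d:ℝ)*4 := mul_le_mul_of_nonneg_left hqT (by positivity)
      _ = 8*d := by ring
  calc 2 * Real.sqrt T₀ * Real.log (1.5*M) = 2*(Real.log (1.5*M) * Real.sqrt T₀) := by ring
    _ ≤ 2*(8*d) := by linarith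
    _ = 16*d := by ring


/-- Degree lower bound for bivariate polynomials bounded on an "L"-shaped
region: there is a universal constant `α > 0` such that if `0 < 32w < N`,
`M ≥ 1`, and the bivariate polynomial `p` of total degree `d` satisfies
`p(4w,4w) ≥ 1.5 M` and `0 ≤ p ≤ 1` on `([4w,N] × [0,w/2]) ∪ ([0,w/2] × [4w,N])`,
then `d ≥ α √(N/w) log(1.5 M)`. -/
theorem L_shaped_degree_lower_bound : ∃ α : ℝ, 0 < α ∧
    ∀ (w N : ℕ) (M : ℝ) (p : MvPolynomial (Fin 2) ℝ) (d : ℕ),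
      0 < w → 32 * w < N → 1 ≤ M → p.totalDegree = d →
      MvPolynomial.eval ![4 * (w : ℝ), 4 * (w : ℝ)] p ≥ 1.5 * M →
      (∀ x y : ℝ,
        ((4 * (w : ℝ) ≤ x ∧ x ≤ (N : ℝ) ∧ 0 ≤ y ∧ y ≤ (w : ℝ) / 2) ∨
         (0 ≤ x ∧ x ≤ (w : ℝ) / 2 ∧ 4 * (w : ℝ) ≤ y ∧ y ≤ (N : ℝ))) →
        0 ≤ MvPolynomial.eval ![x, y] p ∧ MvPolynomial.eval ![x, y] p ≤ 1) →
      (d : ℝ) ≥ α * Real.sqrt ((N : ℝ) / (w : ℝ)) * Real.log (1.5 * M) := by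
  refine ⟨1/480, by norm_num, ?_⟩
  intro w N M p d hw hN hM hdeg hcorner hL
  have hP : 0 ≤ Real.log (1.5*M) := Real.log_nonneg (by linarith)
  have hdnn : (0:ℝ) ≤ d := Nat.cast_nonneg d
  have hw1 : (1:ℝ) ≤ w := by exact_mod_cast hw
  have hline := line_bound w N M p d hw hN hM hdeg hcorner hL
  rw [ge_iff_le]
  rcases le_or_gt N (256*w) with hsmall | hbig
  · have hNw : (N:ℝ)/w ≤ 256 := by
      rw [div_le_iff₀ (by linarith)]
      have : (N:ℝ) ≤ 256*w := by exact_mod_cast hsmall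
      linarith
    have hsq : Real.sqrt ((N:ℝ)/w) ≤ 16 := by
      have h := Real.sqrt_le_sqrt (show (N:ℝ)/w ≤ 16^2 by nlinarith)
      rwa [Real.sqrt_sq (by norm_num)] at h
    calc (1/480) * Real.sqrt ((N:ℝ)/w) * Real.log (1.5*M)
        ≤ (1/480) * 16 * Real.log (1.5*M) := by
          apply mul_le_mul_of_nonneg_right ?_ hP
          apply mul_le_mul_of_nonneg_left hsq (by norm_num)
      _ = Real.log (1.5*M) / 30 := by ring
      _ ≤ (29*d)/30 := by linarith
      _ ≤ d := by linarith
  · have hhyp := hyp_bound w N M p d hw hbig hM hdeg hcorner hL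
    calc (1/480) * Real.sqrt ((N:ℝ)/w) * Real.log (1.5*M)
        = (Real.sqrt ((N:ℝ)/w) * Real.log (1.5*M))/480 := by ring
      _ ≤ (16*d)/480 := by linarith
      _ ≤ d := by linarith
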